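/- Fix α with 1/3 < α < 1/2 and δ > 0, and let S = {w ∈ ℂ : |w| ≥ 1 + δ}. Then there exists C > 0 such that for every integer n ≥ 1 and every w ∈ S, | S_{n−1}(n w) e^{−n w} − (w e^{1−w})^n / (√(2πn)(w − 1)) | ≤ C n^{1−3α} · |(w e^{1−w})^n| / (√(2πn) |w − 1|). -/

import Mathlib

set_option maxHeartbeats 1000000
open MeasureTheory Real Set Filter Topology Finset

namespace Szego3

noncomputable def cc (δ : ℝ) : ℝ := δ/(1+δ)
noncomputable def KK (δ : ℝ) : ℝ := (1+δ)/(2*δ)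
noncomputable def th (δ : ℝ) : ℝ := 1/(2*KK δ + 2)
noncomputable def B1 (δ : ℝ) : ℝ :=
  2*(KK δ*(2/(cc δ)^3) + 1/(cc δ)^2) + 54/((cc δ)^4*(th δ)^3)


lemma integrable_of_exp_bound {c : ℝ} (hc : 0 < c) {f : ℝ → ℂ} (hf : Continuous f)
    (hb : ∀ u : ℝ, 0 < u → ‖f u‖ ≤ Real.exp (-c * u)) :
    IntegrableOn f (Ioi (0:ℝ)) := by
  apply Integrable.mono' (exp_neg_integrableOn_Ioi 0 hc) hf.aestronglyMeasurable.restrict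
  filter_upwards [ae_restrict_mem measurableSet_Ioi] with u hu
  exact hb u hu

lemma integral_exp_neg_complex {a : ℂ} (ha : 0 < a.re) :
    ∫ u : ℝ in Ioi (0:ℝ), Complex.exp (-(a * u)) = 1 / a := by
  have hane : a ≠ 0 := fun h => by simp [h] at ha
  have hderiv : ∀ x ∈ Ici (0:ℝ),
      HasDerivAt (fun u : ℝ => Complex.exp (-(a*u))/(-a)) (Complex.exp (-(a*x))) x := by
    intro x _
    have h1 : HasDerivAt (fun z : ℂ => Complex.exp (-(a*z))) (Complex.exp (-(a*x)) * (-a)) x := by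
      have h0 : HasDerivAt (fun z : ℂ => -(a*z)) (-a) (x:ℂ) := by
        exact ((hasDerivAt_id (x:ℂ)).const_mul a).neg.congr_deriv (by simp)
      exact (Complex.hasDerivAt_exp (-(a*(x:ℂ)))).comp (x:ℂ) h0
    have h2 := (h1.comp_ofReal).div_const (-a)
    have hne : (-a) ≠ 0 := neg_ne_zero.mpr hane
    rw [mul_div_assoc, neg_div_neg_eq, div_self hane, mul_one] at h2
    exact h2
  have hint : IntegrableOn (fun u : ℝ => Complex.exp (-(a*u))) (Ioi (0:ℝ)) := by
    apply integrable_of_exp_bound ha (by continuity)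
    intro u _
    simp [Complex.norm_exp, neg_mul]
  have htend : Tendsto (fun u : ℝ => Complex.exp (-(a*u))/(-a)) atTop (𝓝 0) := by
    rw [tendsto_zero_iff_norm_tendsto_zero]
    have heq : (fun u : ℝ => ‖Complex.exp (-(a*u))/(-a)‖) = fun u => Real.exp (-a.re * u) / ‖a‖ := by
      funext u
      simp [Complex.norm_exp, neg_mul]
    rw [heq]
    have h3 : Tendsto (fun u : ℝ => -a.re * u) atTop atBot := by
      exact (tendsto_const_mul_atBot_of_neg (by linarith : -a.re < 0)).mpr tendsto_id
    simpa using (Real.tendsto_exp_atBot.comp h3).div_const ‖a‖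
  have := integral_Ioi_of_hasDerivAt_of_tendsto' hderiv hint htend
  rw [this]
  simp [div_neg]

/-- Gamma-type moment integral. -/
lemma integral_pow_mul_exp_neg_mul (m : ℕ) {c : ℝ} (hc : 0 < c) :
    ∫ u in Ioi (0:ℝ), u^m * Real.exp (-(c*u)) = (Nat.factorial m : ℝ) / c^(m+1) := by
  have h := Real.integral_rpow_mul_exp_neg_mul_Ioi (by positivity : (0:ℝ) < (m:ℝ)+1) hc
  rw [show ((m:ℝ)+1)-1 = (m:ℝ) by ring] at h
  rw [setIntegral_congr_fun measurableSet_Ioi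
    (fun u hu => by rw [← Real.rpow_natCast u m] : ∀ u ∈ Ioi (0:ℝ),
      u^m * Real.exp (-(c*u)) = u^((m:ℝ)) * Real.exp (-(c*u))), h]
  rw [show ((m:ℝ)+1) = ((m+1:ℕ):ℝ) by push_cast; ring, Real.rpow_natCast]
  rw [show ((m+1:ℕ):ℝ) = (m:ℝ)+1 by push_cast; ring, Real.Gamma_nat_eq_factorial]
  rw [one_div, inv_pow, inv_mul_eq_div]



lemma pow_le_factorial_mul_exp {x : ℝ} (hx : 0 ≤ x) (j : ℕ) :
    x^j ≤ (Nat.factorial j : ℝ) * Real.exp x := by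
  have h1 : x^j / (Nat.factorial j : ℝ) ≤ Real.exp x := by
    refine le_trans ?_ (Real.sum_le_exp_of_nonneg hx (j+1))
    exact Finset.single_le_sum (f := fun i => x^i / (Nat.factorial i : ℝ))
      (fun i _ => by positivity) (Finset.self_mem_range_succ j)
  rw [div_le_iff₀ (by positivity)] at h1
  linarith [h1]

lemma integrableOn_pow_mul_exp_neg_mul (j : ℕ) {c : ℝ} (hc : 0 < c) :
    IntegrableOn (fun u : ℝ => u^j * Real.exp (-(c*u))) (Ioi (0:ℝ)) := by
  have hK : (0:ℝ) < (Nat.factorial j : ℝ) * (2/c)^j := by positivity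
  apply Integrable.mono' ((exp_neg_integrableOn_Ioi 0 (half_pos hc)).const_mul
    ((Nat.factorial j : ℝ) * (2/c)^j))
  · exact (by continuity : Continuous fun u : ℝ => u^j * Real.exp (-(c*u))).aestronglyMeasurable.restrict
  · filter_upwards [ae_restrict_mem measurableSet_Ioi] with u hu
    have hu0 : (0:ℝ) ≤ u := le_of_lt hu
    have h2 : u^j ≤ (Nat.factorial j : ℝ) * (2/c)^j * Real.exp (c/2*u) := by
      have h3 := pow_le_factorial_mul_exp (x := c/2*u) (by positivity) j
      have h4 : u^j = (2/c)^j * (c/2*u)^j := by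
        rw [mul_pow, ← mul_assoc, ← mul_pow]
        field_simp
        simp
      rw [h4]
      calc (2/c)^j * (c/2*u)^j ≤ (2/c)^j * ((Nat.factorial j : ℝ) * Real.exp (c/2*u)) := by
            apply mul_le_mul_of_nonneg_left h3 (by positivity)
        _ = (Nat.factorial j : ℝ) * (2/c)^j * Real.exp (c/2*u) := by ring
    have : ‖u^j * Real.exp (-(c*u))‖ = u^j * Real.exp (-(c*u)) := by
      rw [Real.norm_eq_abs, abs_of_nonneg (by positivity)]
    rw [this]
    calc u^j * Real.exp (-(c*u))
        ≤ ((Nat.factorial j : ℝ) * (2/c)^j * Real.exp (c/2*u)) * Real.exp (-(c*u)) := by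
          apply mul_le_mul_of_nonneg_right h2 (by positivity)
      _ = (Nat.factorial j : ℝ) * (2/c)^j * Real.exp (-(c/2*u)) := by
          rw [mul_assoc, ← Real.exp_add]; ring_nf
      _ = (Nat.factorial j : ℝ) * (2/c)^j * Real.exp (-(c/2)*u) := by ring_nf




lemma norm_cpow_exp (u : ℝ) (hu : 0 < u) (j : ℕ) :
    ‖(u:ℂ)^j * Complex.exp (-(u:ℂ))‖ = u^j * Real.exp (-(1*u)) := by
  rw [norm_mul, norm_pow]
  simp [Complex.norm_exp, abs_of_nonneg hu.le]

lemma integrableOn_cpow_mul_exp (j : ℕ) :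
    IntegrableOn (fun u : ℝ => (u:ℂ)^j * Complex.exp (-(u:ℂ))) (Ioi (0:ℝ)) := by
  apply Integrable.mono' (integrableOn_pow_mul_exp_neg_mul j one_pos)
  · exact (by continuity : Continuous fun u : ℝ =>
      (u:ℂ)^j * Complex.exp (-(u:ℂ))).aestronglyMeasurable.restrict
  · filter_upwards [ae_restrict_mem measurableSet_Ioi] with u hu
    rw [norm_cpow_exp u hu j]

lemma integral_cpow_mul_exp (j : ℕ) :
    ∫ u in Ioi (0:ℝ), (u:ℂ)^j * Complex.exp (-(u:ℂ)) = (Nat.factorial j : ℂ) := by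
  have h : ∀ u ∈ Ioi (0:ℝ), (u:ℂ)^j * Complex.exp (-(u:ℂ))
      = ((u^j * Real.exp (-(1*u)) : ℝ) : ℂ) := by
    intro u hu
    push_cast
    norm_num
  rw [setIntegral_congr_fun measurableSet_Ioi h,
    show (∫ x in Ioi (0:ℝ), ((x^j * Real.exp (-(1*x)) : ℝ) : ℂ))
      = ((∫ x in Ioi (0:ℝ), x^j * Real.exp (-(1*x)) : ℝ) : ℂ) from integral_ofReal,
    integral_pow_mul_exp_neg_mul j one_pos]
  norm_num

lemma key_identity (m : ℕ) (z : ℂ) :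
    ∫ u in Ioi (0:ℝ), (z + u)^m * Complex.exp (-(u:ℂ))
      = (Nat.factorial m : ℂ) * ∑ k ∈ Finset.range (m+1), z^k / (Nat.factorial k : ℂ) := by
  have hexp : ∀ u ∈ Ioi (0:ℝ), (z + u)^m * Complex.exp (-(u:ℂ))
      = ∑ k ∈ Finset.range (m+1),
          (z^k * (Nat.choose m k : ℂ)) * ((u:ℂ)^(m-k) * Complex.exp (-(u:ℂ))) := by
    intro u _
    rw [add_pow, Finset.sum_mul]
    refine Finset.sum_congr rfl fun k _ => by ring
  rw [setIntegral_congr_fun measurableSet_Ioi hexp, integral_finset_sum _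
    (fun k _ => ((integrableOn_cpow_mul_exp (m-k)).const_mul _))]
  have : ∀ k ∈ Finset.range (m+1),
      (∫ u in Ioi (0:ℝ), (z^k * (Nat.choose m k : ℂ)) * ((u:ℂ)^(m-k) * Complex.exp (-(u:ℂ))))
        = (Nat.factorial m : ℂ) * (z^k / (Nat.factorial k : ℂ)) := by
    intro k hk
    rw [MeasureTheory.integral_const_mul, integral_cpow_mul_exp]
    have hk' : k ≤ m := Nat.lt_succ_iff.mp (Finset.mem_range.mp hk)
    have hfact := Nat.choose_mul_factorial_mul_factorial hk'
    have hcast : (Nat.choose m k : ℂ) * (Nat.factorial (m-k) : ℂ)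
        = (Nat.factorial m : ℂ) / (Nat.factorial k : ℂ) := by
      rw [eq_div_iff (by exact_mod_cast Nat.factorial_ne_zero k)]
      push_cast [← hfact]
      ring
    calc z^k * (Nat.choose m k : ℂ) * (Nat.factorial (m-k) : ℂ)
        = z^k * ((Nat.choose m k : ℂ) * (Nat.factorial (m-k) : ℂ)) := by ring
      _ = z^k * ((Nat.factorial m : ℂ) / (Nat.factorial k : ℂ)) := by rw [hcast]
      _ = (Nat.factorial m : ℂ) * (z^k / (Nat.factorial k : ℂ)) := by ring
  rw [Finset.sum_congr rfl this, ← Finset.mul_sum]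



lemma stirling_tendsto' : Tendsto (fun q : ℕ => Stirling.stirlingSeq (q+1)) atTop (𝓝 (Real.sqrt π)) :=
  Stirling.tendsto_stirlingSeq_sqrt_pi.comp (tendsto_add_atTop_nat 1)

lemma stirling_lower (n : ℕ) : Real.sqrt π ≤ Stirling.stirlingSeq (n+1) :=
  Stirling.stirlingSeq'_antitone.le_of_tendsto stirling_tendsto' n

lemma stirling_log_upper (p : ℕ) :
    Real.log (Stirling.stirlingSeq (p+2)) ≤ Real.log (Real.sqrt π) + 1/(4*((p:ℝ)+1)) := by
  have key : ∀ q : ℕ, Real.log (Stirling.stirlingSeq (p+2))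
      - Real.log (Stirling.stirlingSeq (p+2+q)) ≤ 1/(4*((p:ℝ)+1)) - 1/(4*((p:ℝ)+1+q)) := by
    intro q
    induction q with
    | zero => simp
    | succ q ih =>
      have hd := Stirling.log_stirlingSeq_sub_log_stirlingSeq_succ (p+q+2)
      rw [show p+q+2 = p+2+q from by omega, show p+2+q+1 = p+2+(q+1) from by omega] at hd
      have h2 : (1:ℝ)/(4*(↑(p+q+1)+1)^2) ≤ 1/(4*((p:ℝ)+1+q)) - 1/(4*((p:ℝ)+1+(q+1))) := by
        have ha : (0:ℝ) < (p:ℝ)+1+q := by positivity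
        push_cast
        rw [div_sub_div _ _ (by positivity) (by positivity), div_le_div_iff₀ (by positivity) (by positivity)]
        ring_nf
        nlinarith [sq_nonneg ((p:ℝ)+q), ha]
      push_cast at hd h2 ⊢
      ring_nf at ih hd h2 ⊢
      linarith
  have htend : Tendsto (fun q : ℕ => Real.log (Stirling.stirlingSeq (p+2+q))) atTop
      (𝓝 (Real.log (Real.sqrt π))) := by
    have h1 : Tendsto (fun q : ℕ => Stirling.stirlingSeq (p+2+q)) atTop (𝓝 (Real.sqrt π)) := by
      have := Stirling.tendsto_stirlingSeq_sqrt_pi.comp (tendsto_add_atTop_nat (p+2))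
      simpa [Function.comp_def, add_comm] using this
    exact (Real.continuousAt_log (by positivity)).tendsto.comp h1
  have hb : ∀ q : ℕ, Real.log (Stirling.stirlingSeq (p+2)) - 1/(4*((p:ℝ)+1))
      ≤ Real.log (Stirling.stirlingSeq (p+2+q)) := by
    intro q
    have h3 := key q
    have h4 : (0:ℝ) ≤ 1/(4*((p:ℝ)+1+q)) := by positivity
    linarith
  have := ge_of_tendsto' htend hb
  linarith

lemma stirling_upper {n : ℕ} (hn : 1 ≤ n) :
    Stirling.stirlingSeq n ≤ Real.sqrt π * Real.exp (1/(2*(n:ℝ))) := by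
  rcases Nat.lt_or_ge n 2 with h2 | h2
  · interval_cases n
    rw [Stirling.stirlingSeq_one]
    have he : Real.exp 1 < 2.7182818286 := Real.exp_one_lt_d9
    have hs2 : (1.4:ℝ) ≤ Real.sqrt 2 := by
      rw [show (1.4:ℝ) = Real.sqrt (1.4^2) from (Real.sqrt_sq (by norm_num)).symm]
      apply Real.sqrt_le_sqrt; norm_num
    have hsπ : (1.7:ℝ) ≤ Real.sqrt π := by
      rw [show (1.7:ℝ) = Real.sqrt (1.7^2) from (Real.sqrt_sq (by norm_num)).symm]
      apply Real.sqrt_le_sqrt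
      nlinarith [Real.pi_gt_d6]
    have hexph : (1.5:ℝ) ≤ Real.exp (1/(2*(1:ℕ):ℝ)) := by
      have := Real.add_one_le_exp (1/(2*((1:ℕ):ℝ)))
      push_cast at this ⊢
      linarith
    have h5 : Real.exp 1 / Real.sqrt 2 ≤ 2.7182818286/1.4 := by
      apply div_le_div₀ (by norm_num) he.le (by norm_num) hs2
    calc Real.exp 1 / Real.sqrt 2 ≤ 2.7182818286/1.4 := h5
      _ ≤ 1.7 * 1.5 := by norm_num
      _ ≤ Real.sqrt π * Real.exp (1/(2*((1:ℕ):ℝ))) := by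
          apply mul_le_mul hsπ hexph (by norm_num) (by positivity)
  · obtain ⟨p, rfl⟩ : ∃ p, n = p + 2 := ⟨n - 2, by omega⟩
    have h1 := stirling_log_upper p
    have hpos : 0 < Stirling.stirlingSeq (p+2) := Stirling.stirlingSeq'_pos (p+1)
    have h3 : 1/(4*((p:ℝ)+1)) ≤ 1/(2*((p:ℕ)+2:ℝ)) := by
      rw [div_le_div_iff₀ (by positivity) (by positivity)]
      push_cast
      linarith
    have h4 : Real.log (Stirling.stirlingSeq (p+2)) ≤ Real.log (Real.sqrt π) + 1/(2*(((p+2:ℕ)):ℝ)) := by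
      push_cast at h3 ⊢
      linarith
    calc Stirling.stirlingSeq (p+2) = Real.exp (Real.log (Stirling.stirlingSeq (p+2))) :=
          (Real.exp_log hpos).symm
      _ ≤ Real.exp (Real.log (Real.sqrt π) + 1/(2*(((p+2:ℕ)):ℝ))) := Real.exp_le_exp.mpr h4
      _ = Real.sqrt π * Real.exp (1/(2*(((p+2:ℕ)):ℝ))) := by
          rw [Real.exp_add, Real.exp_log (by positivity)]




lemma cc_pos {δ : ℝ} (hδ : 0 < δ) : 0 < cc δ := by unfold cc; positivity
lemma cc_lt_one {δ : ℝ} (hδ : 0 < δ) : cc δ < 1 := by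
  unfold cc; rw [div_lt_one (by positivity)]; linarith
lemma KK_pos {δ : ℝ} (hδ : 0 < δ) : 0 < KK δ := by unfold KK; positivity
lemma th_pos {δ : ℝ} (hδ : 0 < δ) : 0 < th δ := by
  have := KK_pos hδ; unfold th; positivity
lemma th_le_half {δ : ℝ} (hδ : 0 < δ) : th δ ≤ 1/2 := by
  have := KK_pos hδ; unfold th
  rw [div_le_div_iff₀ (by linarith) (by norm_num)]; linarith
lemma KK_mul_th_le {δ : ℝ} (hδ : 0 < δ) : KK δ * th δ ≤ 1/2 := by
  have hK := KK_pos hδ; unfold th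
  rw [mul_one_div, div_le_div_iff₀ (by linarith) (by norm_num)]; linarith
lemma cc_eq {δ : ℝ} (hδ : 0 < δ) : cc δ = 1 - 1/(1+δ) := by
  unfold cc; field_simp; ring

lemma hw_ne {δ : ℝ} (hδ : 0 < δ) {w : ℂ} (hw : 1 + δ ≤ ‖w‖) : w ≠ 0 := by
  intro h; rw [h, norm_zero] at hw; linarith

lemma hRe {δ : ℝ} (hδ : 0 < δ) {w : ℂ} (hw : 1 + δ ≤ ‖w‖) : cc δ ≤ (1 - 1/w).re := by
  have h1 : (1/w).re ≤ 1/(1+δ) := by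
    calc (1/w).re ≤ ‖1/w‖ := Complex.re_le_norm _
      _ = 1/‖w‖ := by rw [norm_div, norm_one]
      _ ≤ 1/(1+δ) := by
          apply div_le_div_of_nonneg_left (by norm_num) (by linarith) hw
  have h2 : (1 - 1/w).re = 1 - (1/w).re := by simp [Complex.sub_re]
  rw [h2, cc_eq hδ]; linarith

lemma g_env {δ : ℝ} (hδ : 0 < δ) {w : ℂ} (hw : 1 + δ ≤ ‖w‖) (u : ℝ) (hu : 0 ≤ u) :
    ‖Complex.exp (-((1 - 1/w) * u))‖ ≤ Real.exp (-(cc δ * u)) := by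
  rw [Complex.norm_exp]
  apply Real.exp_le_exp.mpr
  have h1 : (-((1 - 1/w) * u)).re = -((1 - 1/w).re * u) := by
    simp [Complex.mul_re]
  rw [h1]
  have := hRe hδ hw
  nlinarith

lemma norm_z_le {δ : ℝ} (hδ : 0 < δ) {n : ℕ} (hn : 1 ≤ n) {w : ℂ} (hw : 1 + δ ≤ ‖w‖)
    (u : ℝ) (hu : 0 ≤ u) :
    ‖(u:ℂ)/((n:ℂ)*w)‖ ≤ u/((n:ℝ)*(1+δ)) := by
  have hn1 : (1:ℝ) ≤ (n:ℝ) := by exact_mod_cast hn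
  rw [norm_div, norm_mul, Complex.norm_real, Complex.norm_natCast,
    Real.norm_eq_abs, abs_of_nonneg hu]
  apply div_le_div_of_nonneg_left hu (by positivity)
  apply mul_le_mul_of_nonneg_left _ (by positivity)
  linarith [hw]

lemma f_env {δ : ℝ} (hδ : 0 < δ) {n : ℕ} (hn : 1 ≤ n) {w : ℂ} (hw : 1 + δ ≤ ‖w‖)
    (u : ℝ) (hu : 0 ≤ u) :
    ‖(1 + (u:ℂ)/((n:ℂ)*w))^(n-1) * Complex.exp (-(u:ℂ))‖ ≤ Real.exp (-(cc δ * u)) := by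
  have hn1 : (1:ℝ) ≤ (n:ℝ) := by exact_mod_cast hn
  rw [norm_mul, norm_pow]
  have h1 : ‖1 + (u:ℂ)/((n:ℂ)*w)‖ ≤ Real.exp (u/((n:ℝ)*(1+δ))) := by
    calc ‖1 + (u:ℂ)/((n:ℂ)*w)‖ ≤ ‖(1:ℂ)‖ + ‖(u:ℂ)/((n:ℂ)*w)‖ := norm_add_le _ _
      _ ≤ 1 + u/((n:ℝ)*(1+δ)) := by
          rw [norm_one]; linarith [norm_z_le hδ hn hw u hu]
      _ ≤ Real.exp (u/((n:ℝ)*(1+δ))) := by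
          have := Real.add_one_le_exp (u/((n:ℝ)*(1+δ))); linarith
  have h2 : ‖1 + (u:ℂ)/((n:ℂ)*w)‖^(n-1) ≤ Real.exp (((n-1:ℕ):ℝ) * (u/((n:ℝ)*(1+δ)))) := by
    rw [Real.exp_nat_mul]
    exact pow_le_pow_left₀ (norm_nonneg _) h1 (n-1)
  have hc : ((n-1:ℕ):ℝ) = (n:ℝ) - 1 := by
    push_cast [Nat.cast_sub hn]; ring
  have h3 : ((n-1:ℕ):ℝ) * (u/((n:ℝ)*(1+δ))) ≤ u/(1+δ) := by
    rw [hc]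
    have hne : (n:ℝ) ≠ 0 := by linarith
    have heq : (n:ℝ) * (u/((n:ℝ)*(1+δ))) = u/(1+δ) := by field_simp
    have hmul : ((n:ℝ)-1) * (u/((n:ℝ)*(1+δ))) ≤ (n:ℝ) * (u/((n:ℝ)*(1+δ))) := by
      apply mul_le_mul_of_nonneg_right (by linarith) (by positivity)
    linarith
  have h4 : ‖Complex.exp (-(u:ℂ))‖ = Real.exp (-u) := by
    rw [Complex.norm_exp]
    norm_num
  rw [h4]
  calc ‖1 + (u:ℂ)/((n:ℂ)*w)‖^(n-1) * Real.exp (-u)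
      ≤ Real.exp (((n-1:ℕ):ℝ) * (u/((n:ℝ)*(1+δ)))) * Real.exp (-u) := by
        apply mul_le_mul_of_nonneg_right h2 (Real.exp_nonneg _)
    _ ≤ Real.exp (u/(1+δ)) * Real.exp (-u) := by
        apply mul_le_mul_of_nonneg_right (Real.exp_le_exp.mpr h3) (Real.exp_nonneg _)
    _ = Real.exp (u/(1+δ) - u) := by rw [← Real.exp_add]; ring_nf
    _ = Real.exp (-(cc δ * u)) := by
        congr 1; rw [cc_eq hδ]; field_simp; ring





lemma rpow_third_le {n : ℕ} (hn : 1 ≤ n) : (n:ℝ)^((1:ℝ)/3) ≤ (n:ℝ) := by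
  have hn1 : (1:ℝ) ≤ (n:ℝ) := by exact_mod_cast hn
  calc (n:ℝ)^((1:ℝ)/3) ≤ (n:ℝ)^((1:ℝ)) :=
        Real.rpow_le_rpow_of_exponent_le hn1 (by norm_num)
    _ = (n:ℝ) := Real.rpow_one _

lemma rpow_third_sq_le {n : ℕ} (hn : 1 ≤ n) : ((n:ℝ)^((1:ℝ)/3))^2 ≤ (n:ℝ) := by
  have hn1 : (1:ℝ) ≤ (n:ℝ) := by exact_mod_cast hn
  have h0 : (0:ℝ) ≤ (n:ℝ) := by linarith
  have h1 : ((n:ℝ)^((1:ℝ)/3))^2 = (n:ℝ)^((2:ℝ)/3) := by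
    rw [← Real.rpow_natCast ((n:ℝ)^((1:ℝ)/3)) 2, ← Real.rpow_mul h0]
    norm_num
  rw [h1]
  calc (n:ℝ)^((2:ℝ)/3) ≤ (n:ℝ)^((1:ℝ)) :=
        Real.rpow_le_rpow_of_exponent_le hn1 (by norm_num)
    _ = (n:ℝ) := Real.rpow_one _

lemma pointwise_bound {δ : ℝ} (hδ : 0 < δ) {n : ℕ} (hn : 1 ≤ n) {w : ℂ} (hw : 1 + δ ≤ ‖w‖)
    (u : ℝ) (hu : 0 < u) (huT : u ≤ th δ * (n:ℝ)^((1:ℝ)/3)) :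
    ‖(1 + (u:ℂ)/((n:ℂ)*w))^(n-1) * Complex.exp (-(u:ℂ))
       - Complex.exp (-((1 - 1/w) * u))‖
      ≤ 2/(n:ℝ) * (KK δ * u^2 + u) * Real.exp (-(cc δ * u)) := by
  have hn1 : (1:ℝ) ≤ (n:ℝ) := by exact_mod_cast hn
  have hnR : (0:ℝ) < (n:ℝ) := by linarith
  have hK := KK_pos hδ
  have hθ := th_pos hδ
  have hθh := th_le_half hδ
  have hKθ := KK_mul_th_le hδ
  have hwne := hw_ne hδ hw
  have hnne : ((n:ℂ)) ≠ 0 := by exact_mod_cast (by positivity : (n:ℝ) ≠ 0)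
  have hwnorm : (0:ℝ) < ‖w‖ := by linarith
  set z : ℂ := (u:ℂ)/((n:ℂ)*w) with hzdef
  have hz : ‖z‖ ≤ u/((n:ℝ)*(1+δ)) := norm_z_le hδ hn hw u hu.le
  have hun : u ≤ (n:ℝ) := by
    calc u ≤ th δ * (n:ℝ)^((1:ℝ)/3) := huT
      _ ≤ 1 * (n:ℝ) := mul_le_mul (by linarith) (rpow_third_le hn) (by positivity) (by norm_num)
      _ = (n:ℝ) := one_mul _
  have hzn : ‖z‖ ≤ 1/(1+δ) := by
    refine le_trans hz ?_
    rw [div_le_div_iff₀ (by positivity) (by positivity)]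
    nlinarith
  have hzlt : ‖z‖ < 1 := lt_of_le_of_lt hzn (by rw [div_lt_one (by linarith)]; linarith)
  have h1zne : (1 : ℂ) + z ≠ 0 := by
    intro h
    have hz1 : z = -1 := by linear_combination h
    rw [hz1] at hzlt; simp at hzlt
  -- log bound
  have hlog : ‖Complex.log (1+z) - z‖ ≤ KK δ * ‖z‖^2 := by
    have h := Complex.norm_log_one_add_sub_self_le hzlt
    have h2 : δ/(1+δ) ≤ 1 - ‖z‖ := by
      have : δ/(1+δ) = 1 - 1/(1+δ) := by field_simp; ring
      linarith
    have hinv : (1 - ‖z‖)⁻¹ ≤ (1+δ)/δ := by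
      have h3 := inv_anti₀ (by positivity : (0:ℝ) < δ/(1+δ)) h2
      rwa [inv_div] at h3
    calc ‖Complex.log (1+z) - z‖ ≤ ‖z‖^2 * (1-‖z‖)⁻¹ / 2 := h
      _ ≤ ‖z‖^2 * ((1+δ)/δ) / 2 := by
          apply div_le_div_of_nonneg_right _ (by norm_num)
          · exact mul_le_mul_of_nonneg_left hinv (by positivity)
      _ = KK δ * ‖z‖^2 := by unfold KK; ring
  set a' : ℂ := ((n-1:ℕ):ℂ) * Complex.log (1+z) with ha'
  set b' : ℂ := (u:ℂ)/w with hb'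
  have hcast : ((n-1:ℕ):ℂ) = (n:ℂ) - 1 := by
    push_cast [Nat.cast_sub hn]; ring
  have hzb : ((n-1:ℕ):ℂ)*z - b' = -((u:ℂ)/((n:ℂ)*w)) := by
    rw [hcast, hzdef, hb']
    field_simp
    ring
  have hab : ‖a' - b'‖ ≤ (KK δ * u^2 + u)/(n:ℝ) := by
    have hsplit : a' - b' = ((n-1:ℕ):ℂ) * (Complex.log (1+z) - z) + (((n-1:ℕ):ℂ)*z - b') := by
      ring
    rw [hsplit]
    have hnorm1 : ‖((n-1:ℕ):ℂ) * (Complex.log (1+z) - z)‖ ≤ (n:ℝ) * (KK δ * ‖z‖^2) := by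
      rw [norm_mul, Complex.norm_natCast]
      apply mul_le_mul _ hlog (norm_nonneg _) (by positivity)
      calc ((n-1:ℕ):ℝ) ≤ (n:ℕ) := by exact_mod_cast Nat.sub_le n 1
        _ = (n:ℝ) := rfl
    have hnorm2 : ‖((n-1:ℕ):ℂ)*z - b'‖ ≤ u/((n:ℝ)*(1+δ)) := by
      rw [hzb, norm_neg]
      exact norm_z_le hδ hn hw u hu.le
    have hzu : ‖z‖ ≤ u/(n:ℝ) := by
      refine le_trans hz (div_le_div_of_nonneg_left hu.le hnR ?_)
      nlinarith
    have hzsq : (n:ℝ) * (KK δ * ‖z‖^2) ≤ KK δ * u^2 / (n:ℝ) := by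
      have h5 : ‖z‖^2 ≤ (u/(n:ℝ))^2 := pow_le_pow_left₀ (norm_nonneg z) hzu 2
      calc (n:ℝ) * (KK δ * ‖z‖^2) ≤ (n:ℝ) * (KK δ * (u/(n:ℝ))^2) := by
            apply mul_le_mul_of_nonneg_left _ (by positivity)
            exact mul_le_mul_of_nonneg_left h5 (by positivity)
        _ = KK δ * u^2 / (n:ℝ) := by field_simp
    have hu2 : u/((n:ℝ)*(1+δ)) ≤ u/(n:ℝ) := by
      apply div_le_div_of_nonneg_left hu.le (by positivity)
      nlinarith
    calc ‖((n-1:ℕ):ℂ) * (Complex.log (1+z) - z) + (((n-1:ℕ):ℂ)*z - b')‖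
        ≤ ‖((n-1:ℕ):ℂ) * (Complex.log (1+z) - z)‖ + ‖((n-1:ℕ):ℂ)*z - b'‖ := norm_add_le _ _
      _ ≤ (n:ℝ) * (KK δ * ‖z‖^2) + u/((n:ℝ)*(1+δ)) := add_le_add hnorm1 hnorm2
      _ ≤ KK δ * u^2 / (n:ℝ) + u/(n:ℝ) := add_le_add hzsq hu2
      _ = (KK δ * u^2 + u)/(n:ℝ) := by ring
  have habs1 : ‖a' - b'‖ ≤ 1 := by
    refine le_trans hab ?_
    rw [div_le_one hnR]
    have h7 : u^2 ≤ (th δ)^2 * (n:ℝ) := by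
      have := rpow_third_sq_le hn
      nlinarith
    have hub : u ≤ th δ * (n:ℝ) :=
      le_trans huT (mul_le_mul_of_nonneg_left (rpow_third_le hn) hθ.le)
    nlinarith [mul_le_mul_of_nonneg_left h7 hK.le,
      mul_le_mul_of_nonneg_right hKθ (mul_nonneg hθ.le hnR.le),
      mul_le_mul_of_nonneg_right hθh hnR.le]
  -- the exponential identity
  have hpow : (1+z)^(n-1) = Complex.exp a' := by
    rw [ha', ← Complex.exp_log h1zne, ← Complex.exp_nat_mul, Complex.exp_log h1zne]
  have hgid : Complex.exp (-((1 - 1/w) * u)) = Complex.exp (b' - u) := by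
    congr 1
    rw [hb']
    field_simp
    try ring
  have hfid : (1+z)^(n-1) * Complex.exp (-(u:ℂ)) = Complex.exp (a' - u) := by
    rw [hpow, ← Complex.exp_add, sub_eq_add_neg]
  have hkey : (1+z)^(n-1) * Complex.exp (-(u:ℂ)) - Complex.exp (-((1 - 1/w) * u))
      = Complex.exp (b' - u) * (Complex.exp (a' - b') - 1) := by
    rw [hfid, hgid, mul_sub, ← Complex.exp_add, mul_one]
    congr 2; ring
  rw [hkey, norm_mul]
  have hre : (b' - (u:ℂ)).re ≤ u/(1+δ) - u := by
    have h8 : b'.re ≤ u/(1+δ) := by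
      calc b'.re ≤ ‖b'‖ := Complex.re_le_norm _
        _ = u/‖w‖ := by
            rw [hb', norm_div, Complex.norm_real, Real.norm_eq_abs, abs_of_nonneg hu.le]
        _ ≤ u/(1+δ) := by
            apply div_le_div_of_nonneg_left hu.le (by linarith) hw
    have h9 : (b' - (u:ℂ)).re = b'.re - u := by simp [Complex.sub_re]
    linarith [h9.le, h9.ge]
  have hn2 : ‖Complex.exp (b' - u)‖ ≤ Real.exp (-(cc δ * u)) := by
    rw [Complex.norm_exp]
    apply Real.exp_le_exp.mpr
    have : -(cc δ * u) = u/(1+δ) - u := by rw [cc_eq hδ]; field_simp; ring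
    linarith
  have hn3 : ‖Complex.exp (a' - b') - 1‖ ≤ 2 * ((KK δ * u^2 + u)/(n:ℝ)) := by
    have := Complex.norm_exp_sub_one_le (x := a' - b') habs1
    refine le_trans this ?_
    linarith
  calc ‖Complex.exp (b' - u)‖ * ‖Complex.exp (a' - b') - 1‖
      ≤ Real.exp (-(cc δ * u)) * (2 * ((KK δ * u^2 + u)/(n:ℝ))) := by
        apply mul_le_mul hn2 hn3 (norm_nonneg _) (Real.exp_nonneg _)
    _ = 2/(n:ℝ) * (KK δ * u^2 + u) * Real.exp (-(cc δ * u)) := by ring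





lemma exp_neg_le_27 {y : ℝ} (hy : 0 < y) : Real.exp (-y) ≤ 27/y^3 := by
  have h1 : y/3 ≤ Real.exp (y/3) := by
    have := Real.add_one_le_exp (y/3); linarith
  have h2 : (y/3)^3 ≤ Real.exp y := by
    calc (y/3)^3 ≤ (Real.exp (y/3))^3 := pow_le_pow_left₀ (by positivity) h1 3
      _ = Real.exp y := by rw [← Real.exp_nat_mul]; congr 1; ring
  have h4 : y^3/27 ≤ Real.exp y := by nlinarith [h2]
  rw [Real.exp_neg]
  calc (Real.exp y)⁻¹ ≤ (y^3/27)⁻¹ := inv_anti₀ (by positivity) h4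
    _ = 27/y^3 := by rw [inv_div]

lemma core_integral_bound {δ : ℝ} (hδ : 0 < δ) {n : ℕ} (hn : 1 ≤ n) {w : ℂ}
    (hw : 1 + δ ≤ ‖w‖) :
    ‖(∫ u in Ioi (0:ℝ), (1 + (u:ℂ)/((n:ℂ)*w))^(n-1) * Complex.exp (-(u:ℂ)))
        - w/(w-1)‖ ≤ B1 δ / n := by
  have hn1 : (1:ℝ) ≤ (n:ℝ) := by exact_mod_cast hn
  have hnR : (0:ℝ) < (n:ℝ) := by linarith
  have hc := cc_pos hδ
  have hK := KK_pos hδ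
  have hθ := th_pos hδ
  set c := cc δ
  set K := KK δ
  set f : ℝ → ℂ := fun u => (1 + (u:ℂ)/((n:ℂ)*w))^(n-1) * Complex.exp (-(u:ℂ)) with hfdef
  set g : ℝ → ℂ := fun u => Complex.exp (-((1 - 1/w) * u)) with hgdef
  have hfc : Continuous f := by
    apply Continuous.mul
    · exact (continuous_const.add (Complex.continuous_ofReal.div_const _)).pow _
    · exact Complex.continuous_exp.comp Complex.continuous_ofReal.neg
  have hgc : Continuous g := by
    apply Complex.continuous_exp.comp
    exact (continuous_const.mul Complex.continuous_ofReal).neg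
  have hfint : IntegrableOn f (Ioi (0:ℝ)) := by
    apply integrable_of_exp_bound hc hfc
    intro u hu; rw [neg_mul]; exact f_env hδ hn hw u hu.le
  have hgint : IntegrableOn g (Ioi (0:ℝ)) := by
    apply integrable_of_exp_bound hc hgc
    intro u hu; rw [neg_mul]; exact g_env hδ hw u hu.le
  -- value of ∫ g
  have hRepos : 0 < (1 - 1/w).re := lt_of_lt_of_le hc (hRe hδ hw)
  have hwne := hw_ne hδ hw
  have hw1ne : w - 1 ≠ 0 := by
    intro h
    have hw1 : w = 1 := by linear_combination h
    rw [hw1, norm_one] at hw; linarith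
  have hgval : (∫ u in Ioi (0:ℝ), g u) = w/(w-1) := by
    rw [hgdef]
    simp only []
    rw [integral_exp_neg_complex hRepos]
    rw [show (1:ℂ) - 1/w = (w-1)/w from by field_simp, one_div_div]
  -- split at T
  set T : ℝ := th δ * (n:ℝ)^((1:ℝ)/3) with hTdef
  have hT : 0 < T := by positivity
  have hnormint : IntegrableOn (fun u => ‖f u - g u‖) (Ioi (0:ℝ)) := (hfint.sub hgint).norm
  set φ : ℝ → ℝ := fun u => 2/(n:ℝ) * (K * (u^2 * Real.exp (-(c*u))) + u^1 * Real.exp (-(c*u)))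
    with hφdef
  have hφint : IntegrableOn φ (Ioi (0:ℝ)) := by
    apply Integrable.const_mul
    exact ((integrableOn_pow_mul_exp_neg_mul 2 hc).const_mul K).add
      (integrableOn_pow_mul_exp_neg_mul 1 hc)
  have hφval : (∫ u in Ioi (0:ℝ), φ u) = 2/(n:ℝ) * (K * (2/c^3) + 1/c^2) := by
    rw [hφdef]
    simp only []
    rw [MeasureTheory.integral_const_mul]
    rw [integral_add ((integrableOn_pow_mul_exp_neg_mul 2 hc).const_mul K)
      (integrableOn_pow_mul_exp_neg_mul 1 hc)]
    rw [MeasureTheory.integral_const_mul, integral_pow_mul_exp_neg_mul 2 hc,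
      integral_pow_mul_exp_neg_mul 1 hc]
    norm_num
  -- main split
  have hsplit : (∫ u in Ioi (0:ℝ), ‖f u - g u‖)
      = (∫ u in Ioc (0:ℝ) T, ‖f u - g u‖) + (∫ u in Ioi T, ‖f u - g u‖) := by
    rw [← setIntegral_union (Ioc_disjoint_Ioi le_rfl) measurableSet_Ioi
      (hnormint.mono_set Ioc_subset_Ioi_self) (hnormint.mono_set (Ioi_subset_Ioi hT.le)),
      Ioc_union_Ioi_eq_Ioi hT.le]
  have hbound1 : (∫ u in Ioc (0:ℝ) T, ‖f u - g u‖) ≤ 2/(n:ℝ) * (K * (2/c^3) + 1/c^2) := by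
    calc (∫ u in Ioc (0:ℝ) T, ‖f u - g u‖) ≤ ∫ u in Ioc (0:ℝ) T, φ u := by
          apply setIntegral_mono_on (hnormint.mono_set Ioc_subset_Ioi_self)
            (hφint.mono_set Ioc_subset_Ioi_self) measurableSet_Ioc
          intro u hu
          have hpb := pointwise_bound hδ hn hw u hu.1 hu.2
          rw [hφdef]
          simp only []
          calc ‖f u - g u‖ ≤ 2/(n:ℝ) * (K * u^2 + u) * Real.exp (-(c*u)) := hpb
            _ = 2/(n:ℝ) * (K * (u^2 * Real.exp (-(c*u))) + u^1 * Real.exp (-(c*u))) := by ring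
      _ ≤ ∫ u in Ioi (0:ℝ), φ u := by
          apply setIntegral_mono_set hφint
          · filter_upwards [ae_restrict_mem measurableSet_Ioi] with u hu
            rw [hφdef]
            have hu0 : (0:ℝ) < u := hu
            positivity
          · exact HasSubset.Subset.eventuallyLE Ioc_subset_Ioi_self
      _ = 2/(n:ℝ) * (K * (2/c^3) + 1/c^2) := hφval
  have htailint : IntegrableOn (fun u : ℝ => 2 * Real.exp (-(c*u))) (Ioi T) := by
    have := (exp_neg_integrableOn_Ioi T hc).const_mul 2
    simpa [neg_mul, IntegrableOn] using this
  have hbound2 : (∫ u in Ioi T, ‖f u - g u‖) ≤ 54/(c^4*(th δ)^3) / (n:ℝ) := by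
    have h1 : (∫ u in Ioi T, ‖f u - g u‖) ≤ ∫ u in Ioi T, 2 * Real.exp (-(c*u)) := by
      apply setIntegral_mono_on (hnormint.mono_set (Ioi_subset_Ioi hT.le)) htailint
        measurableSet_Ioi
      intro u hu
      have hu0 : (0:ℝ) < u := lt_trans hT hu
      calc ‖f u - g u‖ ≤ ‖f u‖ + ‖g u‖ := norm_sub_le _ _
        _ ≤ Real.exp (-(c*u)) + Real.exp (-(c*u)) :=
            add_le_add (f_env hδ hn hw u hu0.le) (g_env hδ hw u hu0.le)
        _ = 2 * Real.exp (-(c*u)) := by ring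
    have h2 : (∫ u in Ioi T, 2 * Real.exp (-(c*u))) = 2 * (Real.exp (-(c*T)) / c) := by
      rw [MeasureTheory.integral_const_mul]
      have h3 : (∫ u in Ioi T, Real.exp (-(c*u))) = c⁻¹ * Real.exp (-(c*T)) := by
        have h4 := integral_comp_mul_left_Ioi (fun x => Real.exp (-x)) T hc
        simp only [smul_eq_mul] at h4
        rw [h4, integral_exp_neg_Ioi]
      rw [h3]; ring
    have h5 : Real.exp (-(c*T)) ≤ 27/((c*th δ)^3 * (n:ℝ)) := by
      have hy : 0 < c*T := by positivity
      have h6 := exp_neg_le_27 hy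
      have h8 : ((n:ℝ)^((1:ℝ)/3))^3 = (n:ℝ) := by
        rw [← Real.rpow_natCast ((n:ℝ)^((1:ℝ)/3)) 3, ← Real.rpow_mul (by positivity)]
        norm_num
      have h7 : (c*T)^3 = (c*th δ)^3 * (n:ℝ) := by
        have h9 : (c*T)^3 = (c*th δ)^3 * (((n:ℝ)^((1:ℝ)/3))^3) := by rw [hTdef]; ring
        rw [h9, h8]
      rw [h7] at h6
      exact h6
    calc (∫ u in Ioi T, ‖f u - g u‖) ≤ ∫ u in Ioi T, 2 * Real.exp (-(c*u)) := h1
      _ = 2 * (Real.exp (-(c*T)) / c) := h2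
      _ ≤ 2 * ((27/((c*th δ)^3 * (n:ℝ)))/c) := by gcongr
      _ = 54/(c^4*(th δ)^3) / (n:ℝ) := by
          field_simp
          ring
  -- combine
  have hmain : ‖(∫ u in Ioi (0:ℝ), f u) - w/(w-1)‖ ≤ ∫ u in Ioi (0:ℝ), ‖f u - g u‖ := by
    rw [← hgval, ← integral_sub hfint hgint]
    exact norm_integral_le_integral_norm _
  have hB : 2/(n:ℝ) * (K * (2/c^3) + 1/c^2) + 54/(c^4*(th δ)^3) / (n:ℝ) = B1 δ / (n:ℝ) := by
    unfold B1
    rw [show cc δ = c from rfl, show KK δ = K from rfl]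
    field_simp
  calc ‖(∫ u in Ioi (0:ℝ), f u) - w/(w-1)‖ ≤ ∫ u in Ioi (0:ℝ), ‖f u - g u‖ := hmain
    _ = (∫ u in Ioc (0:ℝ) T, ‖f u - g u‖) + (∫ u in Ioi T, ‖f u - g u‖) := hsplit
    _ ≤ 2/(n:ℝ) * (K * (2/c^3) + 1/c^2) + 54/(c^4*(th δ)^3) / (n:ℝ) := add_le_add hbound1 hbound2
    _ = B1 δ / (n:ℝ) := hB


end Szego3

open Szego3 MeasureTheory Real Set Filter Topology Finset




lemma B1_pos {δ : ℝ} (hδ : 0 < δ) : 0 < B1 δ := by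
  have h1 := cc_pos hδ; have h2 := KK_pos hδ; have h3 := th_pos hδ
  unfold B1; positivity

/-- Outside-the-disk Szegő approximation: for `1/3 < α < 1/2`, `δ > 0`
and `S = {|w| ≥ 1 + δ}`, there is `C > 0` with
`|S_{n−1}(nw) e^{−nw} − (w e^{1−w})^n/(√(2πn)(w−1))|
  ≤ C n^{1−3α} |(w e^{1−w})^n| / (√(2πn)|w−1|)`
for all `n ≥ 1` and `w ∈ S`. -/
theorem stmt_3 (α : ℝ) (hα1 : 1 / 3 < α) (hα2 : α < 1 / 2) (δ : ℝ) (hδ : 0 < δ) :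
    ∃ C > 0, ∀ n : ℕ, 1 ≤ n → ∀ w : ℂ, 1 + δ ≤ ‖w‖ →
      ‖(∑ k ∈ Finset.range n, ((n : ℂ) * w) ^ k / (Nat.factorial k : ℂ)) *
            Complex.exp (-(n : ℂ) * w) -
          (w * Complex.exp (1 - w)) ^ n /
            ((Real.sqrt (2 * Real.pi * n) : ℂ) * (w - 1))‖ ≤
      C * (n : ℝ) ^ ((1 : ℝ) - 3 * α) *
        ‖(w * Complex.exp (1 - w)) ^ n‖ /
          (Real.sqrt (2 * Real.pi * n) * ‖w - 1‖) := by
  set B : ℝ := B1 δ + (1+δ)/δ with hBdef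
  have hB : 0 < B := by
    have := B1_pos hδ; positivity
  refine ⟨2*B, by positivity, ?_⟩
  intro n hn w hw
  -- basic positivity facts
  have hn1 : (1:ℝ) ≤ (n:ℝ) := by exact_mod_cast hn
  have hnR : (0:ℝ) < (n:ℝ) := by linarith
  have hwne := hw_ne hδ hw
  have hnne : ((n:ℂ)) ≠ 0 := by exact_mod_cast (by positivity : (n:ℝ) ≠ 0)
  have hw1 : δ ≤ ‖w - 1‖ := by
    have h := norm_sub_norm_le w 1
    rw [norm_one] at h
    linarith
  have hw1pos : (0:ℝ) < ‖w - 1‖ := lt_of_lt_of_le hδ hw1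
  have hw1ne : w - 1 ≠ 0 := by
    intro h; rw [h, norm_zero] at hw1pos; linarith
  have hw2 : ‖w - 1‖ ≤ 2*‖w‖ := by
    have h := norm_sub_le w 1
    rw [norm_one] at h
    linarith
  have hwpos : (0:ℝ) < ‖w‖ := by linarith
  have hπ := Real.pi_pos
  have hsq2πn : (0:ℝ) < Real.sqrt (2*π*n) := Real.sqrt_pos.mpr (by positivity)
  have hsqπ : (0:ℝ) < Real.sqrt π := Real.sqrt_pos.mpr hπ
  set s : ℝ := Stirling.stirlingSeq n with hsdef
  have hslow : Real.sqrt π ≤ s := by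
    have := stirling_lower (n-1)
    rw [hsdef]
    rwa [show n - 1 + 1 = n from by omega] at this
  have hspos : 0 < s := lt_of_lt_of_le hsqπ hslow
  -- Stirling ratio bound
  have hsratio : s / Real.sqrt π - 1 ≤ 1/(n:ℝ) ∧ 0 ≤ s / Real.sqrt π - 1 := by
    constructor
    · have hup := stirling_upper hn
      have h1 : s / Real.sqrt π ≤ Real.exp (1/(2*(n:ℝ))) := by
        rw [div_le_iff₀ hsqπ]
        rw [hsdef]
        linarith [hup]
      have hx : (0:ℝ) ≤ 1/(2*(n:ℝ)) := by positivity
      have h2 : Real.exp (1/(2*(n:ℝ))) - 1 ≤ (1/(2*(n:ℝ))) * Real.exp (1/(2*(n:ℝ))) := by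
        set x : ℝ := 1/(2*(n:ℝ)) with hxdef
        have h3a : 1 - x ≤ (Real.exp x)⁻¹ := by
          rw [← Real.exp_neg]
          linarith [Real.add_one_le_exp (-x)]
        have h3 : (1-x) * Real.exp x ≤ 1 := by
          calc (1-x)*Real.exp x ≤ (Real.exp x)⁻¹ * Real.exp x :=
                mul_le_mul_of_nonneg_right h3a (Real.exp_pos x).le
            _ = 1 := inv_mul_cancel₀ (Real.exp_pos x).ne'
        nlinarith [h3]
      have h5 : Real.exp (1/(2*(n:ℝ))) ≤ 2 := by
        calc Real.exp (1/(2*(n:ℝ))) ≤ Real.exp (1/2) := by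
              apply Real.exp_le_exp.mpr
              rw [div_le_div_iff₀ (by positivity) (by norm_num)]
              linarith
          _ ≤ 2 := by
              nlinarith [Real.exp_one_lt_d9, Real.exp_pos (1/2:ℝ),
                Real.exp_add (1/2) (1/2), sq_nonneg (Real.exp (1/2) - 2)]
      calc s / Real.sqrt π - 1 ≤ Real.exp (1/(2*(n:ℝ))) - 1 := by linarith
        _ ≤ (1/(2*(n:ℝ))) * Real.exp (1/(2*(n:ℝ))) := h2
        _ ≤ (1/(2*(n:ℝ))) * 2 := by
            apply mul_le_mul_of_nonneg_left h5 (by positivity)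
        _ = 1/(n:ℝ) := by field_simp
    · have : (1:ℝ) ≤ s / Real.sqrt π := by
        rw [le_div_iff₀ hsqπ]; linarith
      linarith
  -- factorial/Stirling identity
  have hfacR : Real.sqrt (2*π*(n:ℝ)) * (n:ℝ)^(n-1) * s
      = Real.sqrt π * ((Nat.factorial (n-1)) : ℝ) * Real.exp (n:ℝ) := by
    have hden : (0:ℝ) < Real.sqrt (2*(n:ℝ)) * ((n:ℝ)/Real.exp 1)^n := by positivity
    have hfact_eq : ((Nat.factorial n : ℝ)) = s * (Real.sqrt (2*(n:ℝ)) * ((n:ℝ)/Real.exp 1)^n) := by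
      rw [hsdef]
      unfold Stirling.stirlingSeq
      field_simp
    have hprev : (n:ℝ) * ((Nat.factorial (n-1)) : ℝ) = (Nat.factorial n : ℝ) := by
      rw [← Nat.cast_mul]
      congr 1
      exact Nat.mul_factorial_pred (by omega)
    have hexp1 : Real.exp 1 ^ n = Real.exp ((n:ℝ)) := by
      rw [← Real.exp_nat_mul]; norm_num
    have hpow : ((n:ℝ)/Real.exp 1)^n = (n:ℝ)^(n-1) * (n:ℝ) * (Real.exp ((n:ℝ)))⁻¹ := by
      rw [div_pow, hexp1, show (n:ℝ)^n = (n:ℝ)^(n-1) * (n:ℝ) from by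
        rw [← pow_succ]; congr 1; omega, div_eq_mul_inv]
    have hsplit : Real.sqrt (2*π*(n:ℝ)) = Real.sqrt π * Real.sqrt (2*(n:ℝ)) := by
      rw [show 2*π*(n:ℝ) = π * (2*(n:ℝ)) from by ring, Real.sqrt_mul hπ.le]
    have hexpn := Real.exp_pos ((n:ℝ))
    have hfact3 : (Nat.factorial n : ℝ) * Real.exp ((n:ℝ))
        = s * Real.sqrt (2*(n:ℝ)) * ((n:ℝ)^(n-1) * (n:ℝ)) := by
      rw [hfact_eq, hpow]
      field_simp
    have h9 : (n:ℝ) * (Real.sqrt (2*π*(n:ℝ)) * (n:ℝ)^(n-1) * s)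
        = (n:ℝ) * (Real.sqrt π * ((Nat.factorial (n-1)) : ℝ) * Real.exp ((n:ℝ))) := by
      rw [hsplit]
      calc (n:ℝ) * (Real.sqrt π * Real.sqrt (2*(n:ℝ)) * (n:ℝ)^(n-1) * s)
          = Real.sqrt π * (s * Real.sqrt (2*(n:ℝ)) * ((n:ℝ)^(n-1) * (n:ℝ))) := by ring
        _ = Real.sqrt π * ((Nat.factorial n : ℝ) * Real.exp ((n:ℝ))) := by
            rw [← hfact3]
        _ = Real.sqrt π * (((n:ℝ) * ((Nat.factorial (n-1)) : ℝ)) * Real.exp ((n:ℝ))) := by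
            rw [hprev]
        _ = (n:ℝ) * (Real.sqrt π * ((Nat.factorial (n-1)) : ℝ) * Real.exp ((n:ℝ))) := by ring
    exact mul_left_cancel₀ hnR.ne' h9
  have hfactpos : (0:ℝ) < ((Nat.factorial (n-1)):ℝ) := by
    exact_mod_cast Nat.factorial_pos (n-1)
  have hfacCne : ((Nat.factorial (n-1)) : ℂ) ≠ 0 := by
    exact_mod_cast hfactpos.ne'
  -- definitions
  set J : ℂ := ∫ u in Ioi (0:ℝ), (1 + (u:ℂ)/((n:ℂ)*w))^(n-1) * Complex.exp (-(u:ℂ)) with hJdef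
  set P : ℂ := ((n:ℂ)*w)^(n-1) / ((Nat.factorial (n-1)) : ℂ) with hPdef
  set Q : ℂ := w/(w-1) * ((s / Real.sqrt π : ℝ) : ℂ) with hQdef
  set M : ℂ := (w^n * Complex.exp ((n:ℂ))) / ((Real.sqrt (2*π*(n:ℝ)) : ℂ) * (w-1)) with hMdef
  -- Sigma = P * J
  have hSigma : (∑ k ∈ Finset.range n, ((n:ℂ)*w)^k / (Nat.factorial k : ℂ)) = P * J := by
    have hid := key_identity (n-1) ((n:ℂ)*w)
    rw [show n-1+1 = n from by omega] at hid
    have hpull : (∫ u in Ioi (0:ℝ), ((n:ℂ)*w + u)^(n-1) * Complex.exp (-(u:ℂ)))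
        = ((n:ℂ)*w)^(n-1) * J := by
      rw [hJdef, ← MeasureTheory.integral_const_mul]
      apply setIntegral_congr_fun measurableSet_Ioi
      intro u _
      change ((n:ℂ)*w + (u:ℂ))^(n-1) * Complex.exp (-(u:ℂ))
        = ((n:ℂ)*w)^(n-1) * ((1 + (u:ℂ)/((n:ℂ)*w))^(n-1) * Complex.exp (-(u:ℂ)))
      rw [show (n:ℂ)*w + (u:ℂ) = ((n:ℂ)*w) * (1 + (u:ℂ)/((n:ℂ)*w)) from by field_simp,
        mul_pow, mul_assoc]
    rw [hpull] at hid
    rw [hPdef, div_mul_eq_mul_div, hid, mul_div_cancel_left₀ _ hfacCne]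
  -- complex cast of Stirling identity
  have hexpC : Complex.exp ((n:ℂ)) = ((Real.exp ((n:ℝ)) : ℝ) : ℂ) := by
    rw [Complex.ofReal_exp, Complex.ofReal_natCast]
  have hfacC : ((Real.sqrt (2*π*(n:ℝ)) : ℝ) : ℂ) * ((n:ℂ))^(n-1) * ((s:ℝ):ℂ)
      = ((Real.sqrt π : ℝ):ℂ) * ((Nat.factorial (n-1)) : ℂ) * ((Real.exp ((n:ℝ)):ℝ):ℂ) := by
    have := congrArg (fun x : ℝ => (x : ℂ)) hfacR
    push_cast at this ⊢
    exact this
  have hwn : w^n = w^(n-1) * w := by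
    rw [← pow_succ]; congr 1; omega
  have hsqne : ((Real.sqrt (2*π*(n:ℝ)) : ℝ) : ℂ) ≠ 0 := by
    exact_mod_cast hsq2πn.ne'
  have hsqπne : ((Real.sqrt π : ℝ) : ℂ) ≠ 0 := by
    exact_mod_cast hsqπ.ne'
  have hPQ : P * Q = ((n:ℂ)^(n-1) * w^n * ((s:ℝ):ℂ))
      / ((((Real.sqrt π):ℝ):ℂ) * ((Nat.factorial (n-1)):ℂ) * (w-1)) := by
    rw [hPdef, hQdef, mul_pow, hwn, Complex.ofReal_div]
    field_simp
  have hM : M = P * Q := by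
    rw [hMdef, hPQ, hexpC,
      div_eq_div_iff (mul_ne_zero hsqne hw1ne)
        (mul_ne_zero (mul_ne_zero hsqπne hfacCne) hw1ne)]
    linear_combination (-(w^n * (w-1))) * hfacC
  -- bound on J - Q
  have hJQ : ‖J - Q‖ ≤ B / (n:ℝ) := by
    have hJ1 : ‖J - w/(w-1)‖ ≤ B1 δ / n := core_integral_bound hδ hn hw
    have hq2 : J - Q = (J - w/(w-1)) - (w/(w-1)) * (((s/Real.sqrt π - 1 : ℝ)):ℂ) := by
      rw [hQdef]
      push_cast
      ring
    have hwq : ‖w/(w-1)‖ ≤ (1+δ)/δ := by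
      rw [norm_div, div_le_div_iff₀ hw1pos hδ]
      have hw1c : ‖w‖ - 1 ≤ ‖w-1‖ := by
        have := norm_sub_norm_le w 1
        rw [norm_one] at this
        linarith
      nlinarith
    have hcastnorm : ‖(((s/Real.sqrt π - 1 : ℝ)):ℂ)‖ ≤ 1/(n:ℝ) := by
      rw [Complex.norm_real, Real.norm_eq_abs, abs_of_nonneg hsratio.2]
      exact hsratio.1
    calc ‖J - Q‖ = ‖(J - w/(w-1)) - (w/(w-1)) * (((s/Real.sqrt π - 1 : ℝ)):ℂ)‖ := by rw [hq2]
      _ ≤ ‖J - w/(w-1)‖ + ‖(w/(w-1)) * (((s/Real.sqrt π - 1 : ℝ)):ℂ)‖ := norm_sub_le _ _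
      _ ≤ B1 δ / n + ((1+δ)/δ) * (1/(n:ℝ)) := by
          apply add_le_add hJ1
          rw [norm_mul]
          apply mul_le_mul hwq hcastnorm (norm_nonneg _) (by positivity)
      _ = B / (n:ℝ) := by rw [hBdef]; field_simp
  -- norm of P and its bound
  have hPnorm : ‖P‖ = (n:ℝ)^(n-1) * ‖w‖^(n-1) / ((Nat.factorial (n-1)):ℝ) := by
    rw [hPdef, norm_div, norm_pow, norm_mul, Complex.norm_natCast, mul_pow]
    congr 1
    rw [show ((Nat.factorial (n-1) : ℕ) : ℂ) = (((Nat.factorial (n-1) : ℕ) : ℝ) : ℂ) from by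
      push_cast; ring]
    rw [Complex.norm_real, Real.norm_eq_abs, abs_of_pos hfactpos]
  have hPle : ‖P‖ ≤ 2 * (‖w‖^n * Real.exp ((n:ℝ))) / (Real.sqrt (2*π*(n:ℝ)) * ‖w - 1‖) := by
    rw [hPnorm, div_le_div_iff₀ hfactpos (by positivity)]
    apply le_of_mul_le_mul_left _ hspos
    have hwpow : ‖w‖^(n-1) * ‖w‖ = ‖w‖^n := by
      rw [← pow_succ]; congr 1; omega
    calc s * ((n:ℝ)^(n-1) * ‖w‖^(n-1) * (Real.sqrt (2*π*(n:ℝ)) * ‖w - 1‖))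
        = (Real.sqrt (2*π*(n:ℝ)) * (n:ℝ)^(n-1) * s) * (‖w‖^(n-1) * ‖w - 1‖) := by ring
      _ = (Real.sqrt π * ((Nat.factorial (n-1)):ℝ) * Real.exp ((n:ℝ))) * (‖w‖^(n-1) * ‖w - 1‖) := by
          rw [hfacR]
      _ ≤ (Real.sqrt π * ((Nat.factorial (n-1)):ℝ) * Real.exp ((n:ℝ))) * (‖w‖^(n-1) * (2*‖w‖)) := by
          apply mul_le_mul_of_nonneg_left _ (by positivity)
          exact mul_le_mul_of_nonneg_left hw2 (by positivity)
      _ = Real.sqrt π * (2 * (‖w‖^(n-1) * ‖w‖ * Real.exp ((n:ℝ))) * ((Nat.factorial (n-1)):ℝ)) := by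
          ring
      _ ≤ s * (2 * (‖w‖^(n-1) * ‖w‖ * Real.exp ((n:ℝ))) * ((Nat.factorial (n-1)):ℝ)) := by
          apply mul_le_mul_of_nonneg_right hslow (by positivity)
      _ = s * (2 * (‖w‖^n * Real.exp ((n:ℝ))) * ((Nat.factorial (n-1)):ℝ)) := by
          rw [hwpow]
  -- rpow bound
  have hrp : 1/(n:ℝ) ≤ (n:ℝ)^((1:ℝ)-3*α) := by
    have h := Real.rpow_le_rpow_of_exponent_le hn1 (show (-1:ℝ) ≤ 1-3*α from by linarith)
    rw [Real.rpow_neg_one] at h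
    rw [one_div]
    exact h
  have hrpnn : (0:ℝ) ≤ (n:ℝ)^((1:ℝ)-3*α) := Real.rpow_nonneg hnR.le _
  -- core bound
  have hcore : ‖(∑ k ∈ Finset.range n, ((n:ℂ)*w)^k / (Nat.factorial k : ℂ)) - M‖
      ≤ 2*B * (n:ℝ)^((1:ℝ)-3*α) * (‖w‖^n * Real.exp ((n:ℝ))) / (Real.sqrt (2*π*(n:ℝ)) * ‖w - 1‖) := by
    have hdiff : (∑ k ∈ Finset.range n, ((n:ℂ)*w)^k / (Nat.factorial k : ℂ)) - M = P * (J - Q) := by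
      rw [hSigma, hM]; ring
    rw [hdiff, norm_mul]
    calc ‖P‖ * ‖J - Q‖ ≤ ‖P‖ * (B/(n:ℝ)) :=
          mul_le_mul_of_nonneg_left hJQ (norm_nonneg P)
      _ = (‖P‖*B) * (1/(n:ℝ)) := by ring
      _ ≤ (‖P‖*B) * ((n:ℝ)^((1:ℝ)-3*α)) := by
          apply mul_le_mul_of_nonneg_left hrp (by positivity)
      _ ≤ ((2 * (‖w‖^n * Real.exp ((n:ℝ))) / (Real.sqrt (2*π*(n:ℝ)) * ‖w - 1‖))*B)
            * ((n:ℝ)^((1:ℝ)-3*α)) := by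
          apply mul_le_mul_of_nonneg_right (mul_le_mul_of_nonneg_right hPle hB.le) hrpnn
      _ = 2*B * (n:ℝ)^((1:ℝ)-3*α) * (‖w‖^n * Real.exp ((n:ℝ))) / (Real.sqrt (2*π*(n:ℝ)) * ‖w - 1‖) := by
          ring
  -- assemble
  have hWE : (w * Complex.exp (1-w))^n = (w^n * Complex.exp ((n:ℂ))) * Complex.exp (-(n:ℂ)*w) := by
    rw [mul_pow, ← Complex.exp_nat_mul]
    rw [show ((n:ℂ))*(1-w) = (n:ℂ) + (-(n:ℂ)*w) from by ring, Complex.exp_add]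
    ring
  have hRHSabs : ‖(w * Complex.exp (1-w))^n‖
      = (‖w‖^n * Real.exp ((n:ℝ))) * ‖Complex.exp (-(n:ℂ)*w)‖ := by
    rw [hWE, norm_mul, norm_mul, norm_pow, hexpC, Complex.norm_real, Real.norm_eq_abs,
      abs_of_pos (Real.exp_pos _)]
  have hLHSeq : (∑ k ∈ Finset.range n, ((n:ℂ)*w)^k / (Nat.factorial k : ℂ))
        * Complex.exp (-(n:ℂ)*w)
      - (w * Complex.exp (1-w))^n / ((Real.sqrt (2*π*(n:ℝ)) : ℂ) * (w-1))
      = ((∑ k ∈ Finset.range n, ((n:ℂ)*w)^k / (Nat.factorial k : ℂ)) - M)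
          * Complex.exp (-(n:ℂ)*w) := by
    rw [hWE, hMdef]
    ring
  rw [hLHSeq, hRHSabs, norm_mul]
  rw [show 2*B * (n:ℝ)^((1:ℝ)-3*α) * ((‖w‖^n * Real.exp ((n:ℝ))) * ‖Complex.exp (-(n:ℂ)*w)‖)
        / (Real.sqrt (2*π*(n:ℝ)) * ‖w - 1‖)
      = (2*B * (n:ℝ)^((1:ℝ)-3*α) * (‖w‖^n * Real.exp ((n:ℝ)))
          / (Real.sqrt (2*π*(n:ℝ)) * ‖w - 1‖)) * ‖Complex.exp (-(n:ℂ)*w)‖ from by ring]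
  exact mul_le_mul_of_nonneg_right hcore (norm_nonneg _)
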